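/- Let k be a field and let kFS⁰(X,Y) ⊆ k[Surj(X,Y)] denote, for finite sets X, Y, the subspace of elements ξ such that for every injection i : U → X with |U| < |X|, the image of ξ under the precomposition-and-project map k[Surj(X,Y)] → k[Surj(U,Y)] (sending [f] to [f∘i] if f∘i is surjective and to 0 otherwise) is zero. Then kFS⁰ is closed under composition: for ξ ∈ kFS⁰(X,Y) and η ∈ kFS⁰(W,X), the composite ξ∘η (computed in the linearized surjection category) lies in kFS⁰(W,Y). Together with containing all identities, kFS⁰ forms a wide k-linear subcategory of the k-linearization of the category of finite sets and surjections. -/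

import Mathlib

open scoped Classical

/-- The set of surjections `X ↠ Y`. -/
def SurjOn (X Y : Type*) : Type _ := {f : X → Y // Function.Surjective f}

variable (k : Type*) [Field k]

/-- The precomposition-and-project map along `i : U → X`: on basis elements it sends
`[f]` to `[f ∘ i]` if `f ∘ i` is surjective, and to `0` otherwise. -/
noncomputable def resMap {X Y U : Type*} (i : U → X) :
    ((SurjOn X Y) →₀ k) →ₗ[k] ((SurjOn U Y) →₀ k) :=
  Finsupp.lift ((SurjOn U Y) →₀ k) k (SurjOn X Y)
    (fun f => if h : Function.Surjective (f.1 ∘ i)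
      then Finsupp.single ⟨f.1 ∘ i, h⟩ (1 : k) else 0)

lemma resMap_apply {X Y U : Type*} (i : U → X) (ξ : (SurjOn X Y) →₀ k) :
    resMap k i ξ = ξ.sum fun f c => c • (if h : Function.Surjective (f.1 ∘ i)
      then Finsupp.single (α := SurjOn U Y) (⟨f.1 ∘ i, h⟩ : SurjOn U Y) (1 : k) else 0) := by
  simp [resMap, Finsupp.lift_apply]

lemma resMap_single {X Y U : Type*} (i : U → X) (f : SurjOn X Y) (c : k) :
    resMap k i (Finsupp.single f c) =
      (if h : Function.Surjective (f.1 ∘ i)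
        then Finsupp.single (α := SurjOn U Y) (⟨f.1 ∘ i, h⟩ : SurjOn U Y) c else 0) := by
  rw [resMap_apply, Finsupp.sum_single_index (by simp)]
  split_ifs with h <;> [exact Finsupp.smul_single_one _ _; exact smul_zero _]

lemma resMap_comp_surj {X Y A B : Type*} (j : B → X) (s : A → B)
    (hs : Function.Surjective s) (ξ : (SurjOn X Y) →₀ k) :
    resMap k (j ∘ s) ξ = Finsupp.mapDomain
      (fun f : SurjOn B Y => (⟨f.1 ∘ s, f.2.comp hs⟩ : SurjOn A Y))
      (resMap k j ξ) := by
  induction ξ using Finsupp.induction_linear with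
  | zero => simp; rfl
  | add ξ η hξ hη => simp [map_add, Finsupp.mapDomain_add, hξ, hη]; rfl
  | single f c =>
    rw [resMap_single, resMap_single]
    have hiff : Function.Surjective (f.1 ∘ (j ∘ s)) ↔ Function.Surjective (f.1 ∘ j) :=
      ⟨fun h => fun y => by obtain ⟨a, ha⟩ := h y; exact ⟨s a, ha⟩,
       fun h => h.comp hs⟩
    by_cases h : Function.Surjective (f.1 ∘ j)
    · erw [dif_pos (hiff.mpr h), dif_pos h, Finsupp.mapDomain_single]
      rfl
    · erw [dif_neg (fun h' => h (hiff.mp h')), dif_neg h, Finsupp.mapDomain_zero]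
      rfl

/-- `kFS⁰(X,Y)`: the subspace of `k[Surj(X,Y)]` of elements killed by every
precomposition-and-project map along an injection from a strictly smaller finite set. -/
noncomputable def kFSzero (X Y : Type*) [Fintype X] : Submodule k ((SurjOn X Y) →₀ k) where
  carrier := {ξ | ∀ (m : ℕ) (i : Fin m → X), Function.Injective i →
    m < Fintype.card X → resMap k i ξ = 0}
  add_mem' := by intro ξ η hξ hη m i hi hm; simp [map_add, hξ m i hi hm, hη m i hi hm]
  zero_mem' := by intro m i hi hm; simp
  smul_mem' := by intro c ξ hξ m i hi hm; simp [map_smul, hξ m i hi hm]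

lemma resMap_eq_zero_of_not_surj {X Y : Type*} [Fintype X] {m : ℕ} (h : Fin m → X)
    (hns : ¬ Function.Surjective h) {ξ : (SurjOn X Y) →₀ k}
    (hξ : ξ ∈ kFSzero k X Y) : resMap k h ξ = 0 := by
  haveI : Fintype (Set.range h) := Subtype.fintype _
  set r := Fintype.card (Set.range h) with hr
  let e : Set.range h ≃ Fin r := Fintype.equivFin _
  let j : Fin r → X := fun a => (e.symm a).1
  have hj : Function.Injective j := fun a b hab => e.symm.injective (Subtype.ext hab)
  let s : Fin m → Fin r := fun a => e ⟨h a, Set.mem_range_self a⟩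
  have hs : Function.Surjective s := by
    intro b
    obtain ⟨a, ha⟩ := (e.symm b).2
    refine ⟨a, ?_⟩
    have : (⟨h a, Set.mem_range_self a⟩ : Set.range h) = e.symm b := Subtype.ext ha
    simp [s, this]
  have hhs : h = j ∘ s := by
    funext a
    simp [j, s]
  have hrlt : r < Fintype.card X := by
    obtain ⟨x, hx⟩ := not_forall.mp hns
    have hx' : x ∉ Set.range h := by
      rintro ⟨a, ha⟩; exact hx ⟨a, ha⟩
    have h2 := Fintype.card_subtype_lt (p := fun y => y ∈ Set.range h) hx'
    convert h2 using 2
  rw [hhs, resMap_comp_surj k j s hs, hξ r j hj hrlt, Finsupp.mapDomain_zero]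
  rfl

/-- Bilinear composition in the linearised surjection category: on basis elements
`[f] ∘ [g] = [f ∘ g]`. -/
noncomputable def compFS {X Y W : Type*} (ξ : (SurjOn X Y) →₀ k)
    (η : (SurjOn W X) →₀ k) : (SurjOn W Y) →₀ k :=
  ξ.sum fun f c => η.sum fun g d =>
    Finsupp.single (⟨f.1 ∘ g.1, f.2.comp g.2⟩ : SurjOn W Y) (c * d)

/-- `kFS⁰` is a wide `k`-linear subcategory of the linearisation of the category of
finite sets and surjections: it is closed under composition and contains all
identities. -/
theorem kFSzero_closed_under_comp_and_id
    (X Y W : Type*) [Fintype X] [Fintype Y] [Fintype W] :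
    (∀ ξ ∈ kFSzero k X Y, ∀ η ∈ kFSzero k W X, compFS k ξ η ∈ kFSzero k W Y) ∧
    (Finsupp.single (⟨id, Function.surjective_id⟩ : SurjOn X X) (1 : k) ∈
      kFSzero k X X) := by
  constructor
  · intro ξ hξ η hη m i hi hm
    set T : ((SurjOn (Fin m) X) →₀ k) →ₗ[k] ((SurjOn (Fin m) Y) →₀ k) :=
      Finsupp.lift _ k _ (fun g : SurjOn (Fin m) X => resMap k g.1 ξ) with hT
    have hTsingle : ∀ (g : SurjOn (Fin m) X) (d : k),
        T (Finsupp.single g d) = d • resMap k g.1 ξ := by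
      intro g d
      rw [hT, Finsupp.lift_apply, Finsupp.sum_single_index (by simp)]
    have step1 : resMap k i (compFS k ξ η) =
        η.sum fun g d => d • resMap k (g.1 ∘ i) ξ := by
      rw [compFS, map_finsuppSum]
      simp only [map_finsuppSum, resMap_single]
      rw [Finsupp.sum_comm]
      refine Finsupp.sum_congr fun g _ => ?_
      rw [resMap_apply, Finsupp.smul_sum]
      refine Finsupp.sum_congr fun f c => (resMap_single k i ⟨f.1 ∘ g.1, f.2.comp g.2⟩ _).trans ?_
      by_cases h : Function.Surjective (f.1 ∘ (g.1 ∘ i))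
      · erw [dif_pos h, dif_pos h, smul_smul, Finsupp.smul_single, smul_eq_mul, mul_one, mul_comm]
        rfl
      · erw [dif_neg h, dif_neg h, smul_zero, smul_zero]
    have step2 : (η.sum fun g d => d • resMap k (g.1 ∘ i) ξ) = T (resMap k i η) := by
      rw [resMap_apply, map_finsuppSum]
      refine Finsupp.sum_congr fun g _ => ?_
      rw [map_smul]
      congr 1
      by_cases h : Function.Surjective (g.1 ∘ i)
      · erw [dif_pos h, hTsingle, one_smul]
      · rw [dif_neg h, map_zero, resMap_eq_zero_of_not_surj k _ h hξ]
    rw [step1, step2, hη m i hi hm, map_zero]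
  · intro m i hi hm
    erw [resMap_single, dif_neg]
    intro hs
    have hc := Fintype.card_le_of_surjective _ hs
    rw [Fintype.card_fin] at hc
    omega
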